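/- arXiv:1408.2881 — 2 statements merged into one kernel-verified Lean document; each statement's English description precedes it below -/
import Mathlib

section
/- Each member of any Martin-Löf random closed set under the (k,ℓ)-induced distribution is truth-table equivalent to an infinite subset of a Martin-Löf random set under λ_{k,ℓ}. Concretely: if x ∈ Γ_S where S ⊆ K^{<ω}, then Y = {σ ∈ S : ι(σ) is an initial segment of x} is infinite, and x is truth-table (indeed, computably, via a fixed recursive translation) equivalent to Y. -/
open MeasureTheory
open scoped NNReal ENNReal Classical

/-- `w` is an initial segment of the infinite binary sequence `x`. -/
def PrefixOf (w : List Bool) (x : ℕ → Bool) : Prop :=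
  ∀ i < w.length, x i = w.getD i false

/-- The cylinder (basic clopen set) of sequences extending the string `w`. -/
def Cyl (w : List Bool) : Set (ℕ → Bool) := {x | PrefixOf w x}

/-- The first coordinate where two distinct sequences differ. -/
noncomputable def firstDiff (x y : ℕ → Bool) (h : x ≠ y) : ℕ :=
  Nat.find (show ∃ n, x n ≠ y n from by
    by_contra hc; push_neg at hc; exact h (funext fun n => hc n))

/-- The standard ultrametric on Cantor space, `υ(x,y) = 2^{-min{n : x n ≠ y n}}`. -/
noncomputable def upsilon (x y : ℕ → Bool) : ℝ :=
  if h : x = y then 0 else (2:ℝ) ^ (-(firstDiff x y h : ℝ))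

/-- Extended-real-valued version of the ultrametric. -/
noncomputable def upsilonE (x y : ℕ → Bool) : ℝ≥0∞ :=
  if h : x = y then 0 else (2:ℝ≥0∞) ^ (-(firstDiff x y h : ℝ))

/-- The `γ`-energy `∬ dμ(a) dμ(b) / υ(a,b)^γ` of a measure on Cantor space. -/
noncomputable def energy (γ : ℝ) (μ : Measure (ℕ → Bool)) : ℝ≥0∞ :=
  ∫⁻ a, ∫⁻ b, (upsilonE a b) ^ (-γ) ∂μ ∂μ

/-- `ν` is the product measure putting each index in the random set
independently with probability `p`. -/
def IsBernoulliProduct {α : Type} (ν : Measure (α → Bool)) (p : ℝ≥0∞) : Prop :=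
  ∀ F : Finset α, ν {S | ∀ a ∈ F, S a = true} = p ^ F.card

/-- Binary encoding of a symbol of `K = 2^k` as a length-`k` binary string. -/
def encSym (k : ℕ) (a : Fin (2^k)) : List Bool := List.ofFn fun i : Fin k => Nat.testBit a.val i.val

/-- The map `ι : K^{<ω} → 2^{<ω}` encoding each symbol in binary and concatenating. -/
def encStr (k : ℕ) (σ : List (Fin (2^k))) : List Bool := (σ.map (encSym k)).flatten

/-- `Γ_S`: the closed set of infinite binary paths through the `ι`-image of the
downward (prefix-) closed part of `S ⊆ K^{<ω}`. -/
def GammaS (k : ℕ) (S : List (Fin (2^k)) → Bool) : Set (ℕ → Bool) :=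
  {x | ∀ n : ℕ, ∃ σ : List (Fin (2^k)), σ.length = n ∧
    (∀ τ, τ <+: σ → S τ = true) ∧ PrefixOf (encStr k σ) x}

/-- The open subset `[V]^⪯` of Cantor space determined by a set of strings `V`. -/
def openOf (V : Set (List Bool)) : Set (ℕ → Bool) := {x | ∃ w ∈ V, PrefixOf w x}

/-- A uniformly c.e. family of sets of binary strings. -/
def CEFamily (U : ℕ → Set (List Bool)) : Prop :=
  ∃ G : ℕ × ℕ → Option (List Bool), Computable G ∧
    ∀ n w, w ∈ U n ↔ ∃ s, G (n, s) = some w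

/-- `x` passes every (plain, unrelativized) Martin-Löf test for the measure `μ`:
Martin-Löf/Hippocrates randomness with respect to `μ`. -/
def PassesPlainTests (μ : Measure (ℕ → Bool)) (x : ℕ → Bool) : Prop :=
  ∀ U : ℕ → Set (List Bool), CEFamily U →
    (∀ n, μ (openOf (U n)) ≤ ((2:ℝ≥0∞) ^ n)⁻¹) → x ∉ ⋂ n, openOf (U n)

/-- Value of a binary string read as a binary number (last bit most significant). -/
def bitsToNat (l : List Bool) : ℕ := l.foldr (fun b acc => 2*acc + cond b 1 0) 0

/-- Truth-table reducibility: a total computable functional, given by a computable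
function producing, for each `n`, a finite query list and a truth table. -/
def ttLE (x y : ℕ → Bool) : Prop :=
  ∃ F : ℕ → List ℕ × List Bool, Computable F ∧
    ∀ n, x n = (F n).2.getD (bitsToNat ((F n).1.map y)) false

/-- Partial recursiveness in an oracle `O` (Kleene-style, following `Nat.Partrec`). -/
inductive RecursiveInOracle (O : ℕ →. ℕ) : (ℕ →. ℕ) → Prop
  | oracle : RecursiveInOracle O O
  | zero : RecursiveInOracle O (pure 0)
  | succ : RecursiveInOracle O fun n => Part.some (n + 1)
  | left : RecursiveInOracle O fun n => Part.some (Nat.unpair n).1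
  | right : RecursiveInOracle O fun n => Part.some (Nat.unpair n).2
  | pair {f g} : RecursiveInOracle O f → RecursiveInOracle O g →
      RecursiveInOracle O fun n => Nat.pair <$> f n <*> g n
  | comp {f g} : RecursiveInOracle O f → RecursiveInOracle O g →
      RecursiveInOracle O fun n => g n >>= f
  | prec {f g} : RecursiveInOracle O f → RecursiveInOracle O g →
      RecursiveInOracle O (Nat.unpaired fun a n =>
        n.rec (f a) fun y IH => do let i ← IH; g (Nat.pair a (Nat.pair y i)))
  | rfind {f} : RecursiveInOracle O f →
      RecursiveInOracle O fun a => Nat.rfind fun n => (fun m => m = 0) <$> f (Nat.pair a n)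

/-- The total oracle corresponding to an infinite binary sequence. -/
def oracleOf (y : ℕ → Bool) : ℕ →. ℕ := fun n => Part.some (cond (y n) 1 0)

/-- Turing reducibility between binary sequences. -/
def turingLE (x y : ℕ → Bool) : Prop := RecursiveInOracle (oracleOf y) (oracleOf x)

/-- A family of string-sets uniformly c.e. in the oracle `O`. -/
def CEInFamily (O : ℕ →. ℕ) (U : ℕ → Set (List Bool)) : Prop :=
  ∃ p : ℕ →. ℕ, RecursiveInOracle O p ∧
    ∀ n w, w ∈ U n ↔ (Nat.pair n (Encodable.encode w)) ∈ p.Dom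

/-- `g` is a representation (an encoding as an oracle) of the measure `μ`:
`g (σ, n)` is a rational within `2^{-n}` of `μ([σ])`. -/
def Represents (g : List Bool × ℕ → ℚ) (μ : Measure (ℕ → Bool)) : Prop :=
  ∀ σ n, |(g (σ, n) : ℝ) - (μ (Cyl σ)).toReal| ≤ (2:ℝ) ^ (-(n:ℝ))

/-- The oracle determined by a representation `g` of a measure. -/
noncomputable def oracleOfRep (g : List Bool × ℕ → ℚ) : ℕ →. ℕ := fun n =>
  Part.some (Encodable.encode ((Encodable.decode (α := List Bool × ℕ) n).map g))

/-- `x` is `μ`-random: it passes every `μ`-relativized Martin-Löf test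
(uniformly c.e. in any representation of `μ`). -/
def MuRandom (μ : Measure (ℕ → Bool)) (x : ℕ → Bool) : Prop :=
  ∀ g : List Bool × ℕ → ℚ, Represents g μ →
    ∀ U : ℕ → Set (List Bool), CEInFamily (oracleOfRep g) U →
      (∀ n, μ (openOf (U n)) ≤ ((2:ℝ≥0∞) ^ n)⁻¹) → x ∉ ⋂ n, openOf (U n)

/-- The `γ`-weight of a set of strings. -/
noncomputable def wt (γ : ℝ) (C : Set (List Bool)) : ℝ≥0∞ :=
  ∑' w : C, (2:ℝ≥0∞) ^ (-(γ * ((w : List Bool)).length))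

/-- `x` is `γ`-random: it passes every Martin-Löf `γ`-test. -/
def GammaRandom (γ : ℝ) (x : ℕ → Bool) : Prop :=
  ∀ U : ℕ → Set (List Bool), CEFamily U →
    (∀ n, wt γ (U n) ≤ ((2:ℝ≥0∞) ^ n)⁻¹) → x ∉ ⋂ n, openOf (U n)



/-! ### Auxiliary definitions and lemmas -/

section Aux

private def toFinK (k m : ℕ) : Fin (2^k) := ⟨m % 2^k, Nat.mod_lt _ (Nat.two_pow_pos k)⟩

private def decK (k L j : ℕ) : List (Fin (2^k)) :=
  (List.range L).map fun i => toFinK k (j / (2^k)^i)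

private def codeK (k : ℕ) (σ : List (Fin (2^k))) : ℕ :=
  σ.foldr (fun a acc => 2^k * acc + a.val) 0

private def tb (j i : ℕ) : Bool := decide (j / 2^i % 2 = 1)

private lemma bitsToNat_cons (b : Bool) (t : List Bool) :
    bitsToNat (b :: t) = 2 * bitsToNat t + cond b 1 0 := rfl

private lemma bitsToNat_lt (l : List Bool) : bitsToNat l < 2 ^ l.length := by
  induction l with
  | nil => simp [bitsToNat]
  | cons b t ih =>
    rw [bitsToNat_cons]
    simp only [List.length_cons, pow_succ]
    cases b <;> simp <;> omega

private lemma tb_bitsToNat (l : List Bool) (i : ℕ) : tb (bitsToNat l) i = l.getD i false := by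
  induction l generalizing i with
  | nil => simp [bitsToNat, tb, Nat.zero_div]
  | cons b t ih =>
    rw [bitsToNat_cons]
    cases i with
    | zero =>
      cases b <;> simp [tb, Nat.mul_add_mod]
    | succ i =>
      have h2 : (2 * bitsToNat t + cond b 1 0) / 2 ^ (i+1)
          = bitsToNat t / 2 ^ i := by
        rw [pow_succ, mul_comm (2^i) 2, ← Nat.div_div_eq_div_mul]
        congr 1
        cases b <;> simp <;> omega
      simp only [tb, h2, List.getD_cons_succ]
      exact ih i

private lemma bitsToNat_inj {l₁ l₂ : List Bool} (h : l₁.length = l₂.length)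
    (he : bitsToNat l₁ = bitsToNat l₂) : l₁ = l₂ := by
  refine List.ext_getElem h fun i h1 h2 => ?_
  have := (tb_bitsToNat l₁ i).symm.trans (by rw [he, tb_bitsToNat])
  rwa [List.getD_eq_getElem _ _ h1, List.getD_eq_getElem _ _ h2] at this

private lemma decK_length (k L j : ℕ) : (decK k L j).length = L := by simp [decK]

private lemma codeK_lt (k : ℕ) (σ : List (Fin (2^k))) : codeK k σ < (2^k)^σ.length := by
  induction σ with
  | nil => simp [codeK]
  | cons a t ih =>
    have ha : a.val < 2^k := a.isLt
    simp only [codeK, List.foldr_cons, List.length_cons, pow_succ] at *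
    calc 2^k * (codeK k t) + a.val < 2^k * (codeK k t) + 2^k := by omega
    _ = 2^k * (codeK k t + 1) := by ring
    _ ≤ 2^k * (2^k)^t.length := by
        have := Nat.succ_le_of_lt ih
        exact Nat.mul_le_mul_left _ this
    _ = (2^k)^t.length * 2^k := by ring

private lemma toFinK_codeK (k : ℕ) (σ : List (Fin (2^k))) (i : ℕ) (h : i < σ.length) :
    toFinK k (codeK k σ / (2^k)^i) = σ[i] := by
  induction σ generalizing i with
  | nil => simp at h
  | cons a t ih =>
    have ha : a.val < 2^k := a.isLt
    cases i with
    | zero =>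
      simp only [codeK, List.foldr_cons, pow_zero, Nat.div_one, List.getElem_cons_zero]
      apply Fin.ext
      simp [toFinK, Nat.mul_add_mod, Nat.mod_eq_of_lt ha]
    | succ i =>
      have h2 : (codeK k (a :: t)) / (2^k)^(i+1) = codeK k t / (2^k)^i := by
        show (2^k * codeK k t + a.val) / (2^k)^(i+1) = _
        rw [pow_succ, mul_comm ((2^k)^i) (2^k), ← Nat.div_div_eq_div_mul]
        congr 1
        rw [Nat.mul_add_div (Nat.two_pow_pos k), Nat.div_eq_of_lt ha, Nat.add_zero]
      rw [h2, List.getElem_cons_succ]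
      exact ih i (by simpa using h)

private lemma decK_codeK (k : ℕ) (σ : List (Fin (2^k))) : decK k σ.length (codeK k σ) = σ := by
  refine List.ext_getElem (by simp [decK_length]) fun i h1 h2 => ?_
  simp only [decK, List.getElem_map, List.getElem_range]
  exact toFinK_codeK k σ i h2

private lemma encSym_length (k : ℕ) (a : Fin (2^k)) : (encSym k a).length = k := by
  simp [encSym]

private lemma encStr_nil (k : ℕ) : encStr k [] = [] := rfl

private lemma encStr_cons (k : ℕ) (a : Fin (2^k)) (σ : List (Fin (2^k))) :
    encStr k (a :: σ) = encSym k a ++ encStr k σ := by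
  simp [encStr]

private lemma encStr_length (k : ℕ) (σ : List (Fin (2^k))) :
    (encStr k σ).length = k * σ.length := by
  induction σ with
  | nil => simp [encStr_nil]
  | cons a t ih =>
    rw [encStr_cons, List.length_append, encSym_length, ih, List.length_cons]
    ring

private lemma encSym_inj (k : ℕ) {a b : Fin (2^k)} (h : encSym k a = encSym k b) : a = b := by
  have hf : (fun i : Fin k => Nat.testBit a.val i.val) = fun i : Fin k => Nat.testBit b.val i.val :=
    List.ofFn_inj.mp h
  apply Fin.ext
  apply Nat.eq_of_testBit_eq
  intro i
  by_cases hi : i < k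
  · exact congrFun hf ⟨i, hi⟩
  · rw [Nat.testBit_lt_two_pow, Nat.testBit_lt_two_pow]
    · exact lt_of_lt_of_le b.isLt (Nat.pow_le_pow_right (by norm_num) (le_of_not_gt hi))
    · exact lt_of_lt_of_le a.isLt (Nat.pow_le_pow_right (by norm_num) (le_of_not_gt hi))

private lemma encStr_inj (k : ℕ) (hk : 1 ≤ k) {σ σ' : List (Fin (2^k))}
    (h : encStr k σ = encStr k σ') : σ = σ' := by
  have hlen : σ.length = σ'.length := by
    have := congrArg List.length h
    rw [encStr_length, encStr_length] at this
    exact Nat.eq_of_mul_eq_mul_left (by omega) this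
  induction σ generalizing σ' with
  | nil => cases σ' with
    | nil => rfl
    | cons b t' => simp at hlen
  | cons a t ih =>
    cases σ' with
    | nil => simp at hlen
    | cons b t' =>
      rw [encStr_cons, encStr_cons] at h
      have hlk : (encSym k a).length = (encSym k b).length := by
        rw [encSym_length, encSym_length]
      obtain ⟨h1, h2⟩ := List.append_inj h hlk
      have := encSym_inj k h1
      subst this
      have := ih h2 (by simpa using hlen)
      rw [this]

private lemma prefixOf_unique {w w' : List Bool} {x : ℕ → Bool}
    (h : PrefixOf w x) (h' : PrefixOf w' x) (hl : w.length = w'.length) : w = w' := by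
  refine List.ext_getElem hl fun i h1 h2 => ?_
  rw [← List.getD_eq_getElem _ false h1, ← List.getD_eq_getElem _ false h2,
    ← h i h1, ← h' i h2]

private lemma getD_range_map {β : Type*} (h : ℕ → β) {q j : ℕ} (hj : j < q) (d : β) :
    ((List.range q).map h).getD j d = h j := by
  rw [List.getD_eq_getElem _ d (by simpa using hj)]
  simp

section Ctx

variable {k : ℕ} (hk : 1 ≤ k) {S : List (Fin (2^k)) → Bool} {x : ℕ → Bool}
  (hx : x ∈ GammaS k S)

include hx in
private lemma exists_can (L : ℕ) :
    ∃ σ : List (Fin (2^k)), σ.length = L ∧ S σ = true ∧ PrefixOf (encStr k σ) x := by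
  obtain ⟨σ, h1, h2, h3⟩ := hx L
  exact ⟨σ, h1, h2 σ (List.prefix_refl σ), h3⟩

include hk hx in
private lemma S_of_pre (σ : List (Fin (2^k))) (h : PrefixOf (encStr k σ) x) : S σ = true := by
  obtain ⟨σ', h1, h2, h3⟩ := exists_can hx σ.length
  have he : encStr k σ = encStr k σ' :=
    prefixOf_unique h h3 (by rw [encStr_length, encStr_length, h1])
  have := encStr_inj k hk he
  rw [this]; exact h2

include hk in
private lemma pre_unique {σ σ' : List (Fin (2^k))} (hl : σ.length = σ'.length)
    (h : PrefixOf (encStr k σ) x) (h' : PrefixOf (encStr k σ') x) : σ = σ' :=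
  encStr_inj k hk (prefixOf_unique h h' (by rw [encStr_length, encStr_length, hl]))

include hk hx in
private lemma y_eq (σ : List (Fin (2^k))) :
    (S σ && decide (PrefixOf (encStr k σ) x)) = decide (PrefixOf (encStr k σ) x) := by
  by_cases h : PrefixOf (encStr k σ) x
  · simp [h, S_of_pre hk hx σ h]
  · simp [h]

end Ctx

/-! ### Computability lemmas -/

private lemma primrec_pow : Primrec₂ (fun a b : ℕ => a ^ b) :=
  Primrec₂.unpaired'.mp Nat.Primrec.pow

private lemma primrec_tb : Primrec₂ tb := by
  unfold tb
  have h1 : Primrec fun p : ℕ × ℕ => p.1 / 2 ^ p.2 % 2 :=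
    Primrec.nat_mod.comp
      (Primrec.nat_div.comp Primrec.fst (primrec_pow.comp (Primrec.const 2) Primrec.snd))
      (Primrec.const 2)
  exact (Primrec.eq.comp h1 (Primrec.const 1)).decide.to₂

private lemma primrec_toFinK (k : ℕ) : Primrec (toFinK k) := by
  apply Primrec.fin_val_iff.mp
  exact Primrec.nat_mod.comp Primrec.id (Primrec.const (2^k))

private lemma primrec_decK (k : ℕ) : Primrec₂ (decK k) := by
  have hf : Primrec fun p : ℕ × ℕ => List.range p.1 := Primrec.list_range.comp Primrec.fst
  have hg : Primrec fun q : (ℕ × ℕ) × ℕ => toFinK k (q.1.2 / (2^k)^q.2) :=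
    (primrec_toFinK k).comp (Primrec.nat_div.comp (Primrec.snd.comp Primrec.fst)
      (primrec_pow.comp (Primrec.const (2^k)) Primrec.snd))
  exact (Primrec.list_map hf hg.to₂).to₂

private lemma primrec_encSym (k : ℕ) : Primrec (encSym k) := Primrec.dom_finite _

private lemma primrec_encStr (k : ℕ) : Primrec (encStr k) := by
  unfold encStr
  exact Primrec.list_flatten.comp
    (Primrec.list_map Primrec.id ((primrec_encSym k).comp Primrec.snd).to₂)

private lemma primrec_bitsToNat : Primrec bitsToNat := by
  have h := Primrec.list_foldr (Primrec.id (α := List Bool)) (Primrec.const 0)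
    ((Primrec.nat_add.comp
      (Primrec.nat_mul.comp (Primrec.const 2) (Primrec.snd.comp Primrec.snd))
      (Primrec.cond (Primrec.fst.comp Primrec.snd) (Primrec.const 1) (Primrec.const 0))).to₂)
  exact h.of_eq fun l => rfl

private lemma computable_range_map {α σ : Type} [Primcodable α] [Primcodable σ]
    {m : α → ℕ} {h : α → ℕ → σ} (hm : Computable m) (hh : Computable₂ h) :
    Computable fun a => (List.range (m a)).map (h a) := by
  have hrec : Computable fun a => Nat.rec (motive := fun _ => List σ) []
      (fun y IH => IH ++ [h a y]) (m a) :=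
    Computable.nat_rec hm (Computable.const [])
      ((Computable.list_concat.comp (Computable.snd.comp Computable.snd)
        (hh.comp Computable.fst (Computable.fst.comp Computable.snd))).to₂)
  refine hrec.of_eq fun a => ?_
  induction m a with
  | zero => simp
  | succ n ih => rw [List.range_succ]; simp [ih]

end Aux

section Main

variable {k : ℕ}

private noncomputable def ginv (f : ℕ → List (Fin (2^k))) (hfb : Function.Bijective f)
    (σ : List (Fin (2^k))) : ℕ := Nat.find (hfb.2 σ)

private lemma f_ginv (f : ℕ → List (Fin (2^k))) (hfb : Function.Bijective f)
    (σ : List (Fin (2^k))) : f (ginv f hfb σ) = σ := Nat.find_spec (hfb.2 σ)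

private lemma computable_ginv (f : ℕ → List (Fin (2^k))) (hfc : Computable f)
    (hfb : Function.Bijective f) : Computable (ginv f hfb) := by
  have hp : Computable₂ fun (σ : List (Fin (2^k))) (n : ℕ) => decide (f n = σ) :=
    (Primrec.eq.decide.to_comp.comp (hfc.comp Computable.snd) Computable.fst).to₂
  have hpr : Partrec fun σ : List (Fin (2^k)) =>
      Nat.rfind fun n => Part.some (decide (f n = σ)) := Partrec.rfind hp.partrec₂
  refine hpr.of_eq_tot fun σ => ?_
  refine Nat.mem_rfind.2 ?_
  constructor
  · simp only [Part.mem_some_iff]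
    rw [eq_comm, decide_eq_true_eq]
    exact f_ginv f hfb σ
  · intro m hm
    simp only [Part.mem_some_iff]
    rw [eq_comm, decide_eq_false_iff_not]
    exact Nat.find_min (hfb.2 σ) hm

/-- Queries and table for the reduction `x ≤tt y`. -/
private noncomputable def F1 (k : ℕ) (f : ℕ → List (Fin (2^k))) (hfb : Function.Bijective f)
    (n : ℕ) : List ℕ × List Bool :=
  ((List.range ((2^k)^(n+1))).map fun i => ginv f hfb (decK k (n+1) i),
   (List.range (2 ^ ((2^k)^(n+1)))).map fun j =>
     (encStr k (decK k (n+1)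
       ((List.range ((2^k)^(n+1))).findIdx fun i => tb j i))).getD n false)

private lemma computable_F1 (f : ℕ → List (Fin (2^k))) (hfc : Computable f)
    (hfb : Function.Bijective f) : Computable (F1 k f hfb) := by
  have hq : Computable fun n : ℕ => (2^k)^(n+1) :=
    (primrec_pow.comp (Primrec.const (2^k)) Primrec.succ).to_comp
  have h1 : Computable fun n : ℕ =>
      (List.range ((2^k)^(n+1))).map fun i => ginv f hfb (decK k (n+1) i) := by
    refine computable_range_map hq ?_
    have hd : Computable fun p : ℕ × ℕ => decK k (p.1+1) p.2 :=
      (primrec_decK k).to_comp.comp (Computable.succ.comp Computable.fst) Computable.snd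
    exact ((computable_ginv f hfc hfb).comp hd).to₂
  have h2 : Computable fun n : ℕ =>
      (List.range (2 ^ ((2^k)^(n+1)))).map fun j =>
        (encStr k (decK k (n+1)
          ((List.range ((2^k)^(n+1))).findIdx fun i => tb j i))).getD n false := by
    refine computable_range_map
      ((primrec_pow.comp (Primrec.const 2)
        (primrec_pow.comp (Primrec.const (2^k)) Primrec.succ)).to_comp) ?_
    have hq' : Primrec fun p : ℕ × ℕ => (2^k)^(p.1+1) :=
      primrec_pow.comp (Primrec.const (2^k)) (Primrec.succ.comp Primrec.fst)
    have hidx : Primrec fun p : ℕ × ℕ =>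
        (List.range ((2^k)^(p.1+1))).findIdx fun i => tb p.2 i :=
      Primrec.list_findIdx (Primrec.list_range.comp hq')
        ((primrec_tb.comp (Primrec.snd.comp Primrec.fst) Primrec.snd).to₂)
    have hσ : Primrec fun p : ℕ × ℕ =>
        decK k (p.1+1) ((List.range ((2^k)^(p.1+1))).findIdx fun i => tb p.2 i) :=
      (primrec_decK k).comp (Primrec.succ.comp Primrec.fst) hidx
    exact (((Primrec.list_getD false).comp ((primrec_encStr k).comp hσ)
      Primrec.fst).to_comp).to₂
  exact h1.pair h2

/-- Queries and table for the reduction `y ≤tt x`. -/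
private def F2 (k : ℕ) (f : ℕ → List (Fin (2^k))) (n : ℕ) : List ℕ × List Bool :=
  (List.range (k * (f n).length),
   (List.range (2 ^ (k * (f n).length))).map fun j =>
     decide (j = bitsToNat (encStr k (f n))))

private lemma computable_F2 (f : ℕ → List (Fin (2^k))) (hfc : Computable f) :
    Computable (F2 k f) := by
  have hh : Primrec fun σ : List (Fin (2^k)) =>
      ((List.range (k * σ.length),
        (List.range (2 ^ (k * σ.length))).map fun j =>
          decide (j = bitsToNat (encStr k σ))) : List ℕ × List Bool) := by
    have hq : Primrec fun σ : List (Fin (2^k)) => k * σ.length :=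
      Primrec.nat_mul.comp (Primrec.const k) Primrec.list_length
    refine (Primrec.list_range.comp hq).pair ?_
    refine Primrec.list_map (Primrec.list_range.comp
      (primrec_pow.comp (Primrec.const 2) hq)) ?_
    exact (Primrec.eq.comp Primrec.snd
      (primrec_bitsToNat.comp ((primrec_encStr k).comp Primrec.fst))).decide.to₂
  exact (hh.to_comp.comp hfc).of_eq fun n => rfl

end Main

theorem stmt15 (k : ℕ) (hk : 1 ≤ k) (f : ℕ → List (Fin (2^k)))
    (hfc : Computable f) (hfb : Function.Bijective f)
    (S : List (Fin (2^k)) → Bool) (x : ℕ → Bool) (hx : x ∈ GammaS k S) :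
    {σ : List (Fin (2^k)) | S σ = true ∧ PrefixOf (encStr k σ) x}.Infinite ∧
    (∀ τ : List Bool, k ∣ τ.length →
      (PrefixOf τ x ↔ ∃ σ, S σ = true ∧ PrefixOf (encStr k σ) x ∧ encStr k σ = τ)) ∧
    ttLE x (fun n => S (f n) && decide (PrefixOf (encStr k (f n)) x)) ∧
    ttLE (fun n => S (f n) && decide (PrefixOf (encStr k (f n)) x)) x := by
  refine ⟨?_, ?_, ?_, ?_⟩
  · -- infiniteness
    choose c hc1 hc2 hc3 using exists_can hx
    refine Set.infinite_of_injective_forall_mem (f := c) ?_ ?_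
    · intro a b hab
      rw [← hc1 a, ← hc1 b, hab]
    · intro L
      exact ⟨hc2 L, hc3 L⟩
  · -- characterization of prefixes of x of length divisible by k
    rintro τ ⟨L, hL⟩
    constructor
    · intro hpre
      obtain ⟨σ, h1, h2, h3⟩ := exists_can hx L
      refine ⟨σ, h2, h3, ?_⟩
      exact prefixOf_unique h3 hpre (by rw [encStr_length, h1, hL])
    · rintro ⟨σ, hS, hpre, rfl⟩
      exact hpre
  · -- x ≤tt y
    refine ⟨F1 k f hfb, computable_F1 f hfc hfb, fun n => ?_⟩
    set y : ℕ → Bool := fun m => S (f m) && decide (PrefixOf (encStr k (f m)) x) with hy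
    set L := n + 1 with hL
    set q := (2^k)^L with hq
    have hA : (F1 k f hfb n).1.map y
        = (List.range q).map fun i => decide (PrefixOf (encStr k (decK k L i)) x) := by
      show ((List.range q).map fun i => ginv f hfb (decK k L i)).map y = _
      rw [List.map_map]
      refine List.map_congr_left fun i _ => ?_
      show y (ginv f hfb (decK k L i)) = _
      rw [hy]
      simp only
      rw [f_ginv f hfb (decK k L i)]
      exact y_eq hk hx _
    set j := bitsToNat ((F1 k f hfb n).1.map y) with hj
    have hjlt : j < 2 ^ q := by
      rw [hj, hA]
      have h := bitsToNat_lt ((List.range q).map fun i =>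
        decide (PrefixOf (encStr k (decK k L i)) x))
      rwa [List.length_map, List.length_range] at h
    have htb : ∀ i, i < q → tb j i = decide (PrefixOf (encStr k (decK k L i)) x) := by
      intro i hi
      rw [hj, tb_bitsToNat, hA, getD_range_map _ hi]
    obtain ⟨σs, hs1, hs2, hs3⟩ := exists_can hx L
    have hcode : codeK k σs < q := by rw [hq, ← hs1]; exact codeK_lt k σs
    have hdecs : decK k L (codeK k σs) = σs := by rw [← hs1]; exact decK_codeK k σs
    have hex : ∃ i ∈ List.range q, (fun i => tb j i) i = true :=
      ⟨codeK k σs, List.mem_range.2 hcode, by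
        show tb j (codeK k σs) = true
        rw [htb _ hcode, hdecs]; exact decide_eq_true hs3⟩
    set i1 := (List.range q).findIdx fun i => tb j i with hi1
    have hlt : i1 < q := by
      have := List.findIdx_lt_length_of_exists hex
      rwa [List.length_range] at this
    have hp1 : tb j i1 = true := by
      have h := List.findIdx_getElem (p := fun i => tb j i) (xs := List.range q)
        (w := by rwa [List.length_range])
      rwa [List.getElem_range] at h
    have hpre1 : PrefixOf (encStr k (decK k L i1)) x := by
      have h := htb i1 hlt
      rw [hp1] at h
      exact of_decide_eq_true h.symm
    have hde : decK k L i1 = σs :=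
      pre_unique hk (by rw [decK_length, hs1]) hpre1 hs3
    have hgoal : (F1 k f hfb n).2.getD j false = (encStr k (decK k L i1)).getD n false := by
      show ((List.range (2^q)).map _).getD j false = _
      rw [getD_range_map _ hjlt]
    rw [hgoal, hde]
    refine hs3 n ?_
    rw [encStr_length, hs1]
    calc n < n + 1 := Nat.lt_succ_self n
    _ ≤ k * (n + 1) := Nat.le_mul_of_pos_left _ (by omega)
  · -- y ≤tt x
    refine ⟨F2 k f, computable_F2 f hfc, fun n => ?_⟩
    show (S (f n) && decide (PrefixOf (encStr k (f n)) x)) = _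
    set q := k * (f n).length with hq
    have hlen : (encStr k (f n)).length = q := encStr_length k (f n)
    have hmapx : (F2 k f n).1.map x = (List.range q).map x := by
      show (List.range q).map x = _
      rfl
    have hAlen : ((List.range q).map x).length = q := by simp
    have hjlt : bitsToNat ((List.range q).map x) < 2^q := by
      have := bitsToNat_lt ((List.range q).map x)
      rwa [hAlen] at this
    have htab : (F2 k f n).2.getD (bitsToNat ((F2 k f n).1.map x)) false
        = decide (bitsToNat ((List.range q).map x) = bitsToNat (encStr k (f n))) := by
      show ((List.range (2^q)).map _).getD _ false = _
      rw [hmapx, getD_range_map _ hjlt]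
    rw [htab]
    by_cases h : PrefixOf (encStr k (f n)) x
    · have hAe : (List.range q).map x = encStr k (f n) := by
        refine List.ext_getElem (by rw [hAlen, hlen]) fun i h1 h2 => ?_
        simp only [List.getElem_map, List.getElem_range]
        rw [← List.getD_eq_getElem _ false h2]
        exact h i h2
      rw [hAe]
      simp [h, S_of_pre hk hx _ h]
    · have hne : bitsToNat ((List.range q).map x) ≠ bitsToNat (encStr k (f n)) := by
        intro he
        apply h
        have hAe : (List.range q).map x = encStr k (f n) :=
          bitsToNat_inj (by rw [hAlen, hlen]) he
        intro i hi
        rw [← hAe, getD_range_map x (by rwa [hlen] at hi)]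
      simp [h, hne]
end

section
/- If x ∈ 2^ω is β-capacitable for some β > γ ≥ 0, then x is γ-energy random (and hence Hippocrates γ-energy random). -/
open MeasureTheory
open scoped NNReal ENNReal Classical

def pref (a : ℕ → Bool) (k : ℕ) : List Bool := List.ofFn fun i : Fin k => a i

lemma mem_cyl_pref {a b : ℕ → Bool} {k : ℕ} : b ∈ Cyl (pref a k) ↔ ∀ i < k, b i = a i := by
  constructor
  · intro h i hi
    have := h i (by simpa [pref] using hi)
    simpa [pref, List.getD, List.getElem?_ofFn, hi] using this
  · intro h i hi
    rw [pref, List.length_ofFn] at hi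
    simp [pref, List.getD, List.getElem?_ofFn, hi, h i hi]

lemma measurableSet_cyl (w : List Bool) : MeasurableSet (Cyl w) := by
  have : Cyl w = ⋂ i ∈ Finset.range w.length, {x : ℕ → Bool | x i = w.getD i false} := by
    ext x; simp [Cyl, PrefixOf]
  rw [this]
  exact Finset.measurableSet_biInter _ fun i _ =>
    (measurable_pi_apply i) (measurableSet_singleton _)

lemma two_rpow_lt_one {r : ℝ} (hr : r < 0) : (2:ℝ≥0∞) ^ r < 1 := by
  have := ENNReal.rpow_lt_one_of_one_lt_of_neg (x := 2) (by norm_num) hr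
  exact this

lemma mu_singleton_zero {μ : Measure (ℕ → Bool)} {c : ℝ≥0} {β : ℝ} (hβ : 0 < β)
    (hμ : ∀ σ : List Bool, μ (Cyl σ) ≤ (c:ℝ≥0∞) * (2:ℝ≥0∞) ^ (-(β * σ.length)))
    (a : ℕ → Bool) : μ {a} = 0 := by
  have hsub : ∀ n : ℕ, μ {a} ≤ (c:ℝ≥0∞) * ((2:ℝ≥0∞) ^ (-β)) ^ n := by
    intro n
    have h1 : ({a} : Set (ℕ → Bool)) ⊆ Cyl (pref a n) := by
      intro y hy; rcases hy with rfl; exact mem_cyl_pref.2 fun i _ => rfl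
    calc μ {a} ≤ μ (Cyl (pref a n)) := measure_mono h1
      _ ≤ (c:ℝ≥0∞) * (2:ℝ≥0∞) ^ (-(β * (pref a n).length)) := hμ _
      _ = (c:ℝ≥0∞) * ((2:ℝ≥0∞) ^ (-β)) ^ n := by
          rw [pref, List.length_ofFn]
          rw [show -(β * (n:ℕ)) = (-β) * (n:ℕ) by ring, ENNReal.rpow_mul,
            ENNReal.rpow_natCast]
  have htend : Filter.Tendsto (fun n : ℕ => (c:ℝ≥0∞) * ((2:ℝ≥0∞) ^ (-β)) ^ n)
      Filter.atTop (nhds 0) := by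
    have h0 : Filter.Tendsto (fun n : ℕ => ((2:ℝ≥0∞) ^ (-β)) ^ n) Filter.atTop (nhds 0) :=
      ENNReal.tendsto_pow_atTop_nhds_zero_of_lt_one (two_rpow_lt_one (by linarith))
    simpa using ENNReal.Tendsto.const_mul h0 (Or.inr ENNReal.coe_ne_top)
  exact le_antisymm (ge_of_tendsto' htend hsub) (by simp)

lemma pointwise_bound (γ : ℝ) (a b : ℕ → Bool) :
    (upsilonE a b) ^ (-γ) ≤
      (∑' n : ℕ, (Cyl (pref a n) \ Cyl (pref a (n+1))).indicator
        (fun _ => (2:ℝ≥0∞) ^ (γ * n)) b) +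
      ({a} : Set (ℕ → Bool)).indicator (fun _ => (⊤ : ℝ≥0∞)) b := by
  by_cases h : b = a
  · subst h
    simp [Set.indicator_of_mem]
  · have h' : a ≠ b := fun e => h e.symm
    set n := firstDiff a b h' with hn
    have hE : ∃ m, a m ≠ b m := by
      by_contra hc; push_neg at hc; exact h' (funext fun m => hc m)
    have hne : a n ≠ b n := by
      rw [hn, firstDiff]; exact Nat.find_spec hE
    have hlt : ∀ i < n, a i = b i := by
      intro i hi
      rw [hn, firstDiff] at hi
      have := Nat.find_min _ hi
      simpa using this
    have hmem : b ∈ Cyl (pref a n) \ Cyl (pref a (n+1)) := by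
      constructor
      · exact mem_cyl_pref.2 fun i hi => (hlt i hi).symm
      · intro hc
        exact hne ((mem_cyl_pref.1 hc n (Nat.lt_succ_self n)).symm)
    have hval : (upsilonE a b) ^ (-γ) = (2:ℝ≥0∞) ^ (γ * n) := by
      rw [upsilonE, dif_neg h']
      rw [← ENNReal.rpow_mul]
      ring_nf
      rw [hn, mul_comm]
    rw [hval]
    calc (2:ℝ≥0∞) ^ (γ * n)
        = (Cyl (pref a n) \ Cyl (pref a (n+1))).indicator
            (fun _ => (2:ℝ≥0∞) ^ (γ * n)) b := (Set.indicator_of_mem hmem (fun _ => (2:ℝ≥0∞) ^ (γ * (n:ℝ)))).symm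
      _ ≤ ∑' m : ℕ, (Cyl (pref a m) \ Cyl (pref a (m+1))).indicator
            (fun _ => (2:ℝ≥0∞) ^ (γ * m)) b := ENNReal.le_tsum n
      _ ≤ _ := le_self_add

lemma energy_finite {μ : Measure (ℕ → Bool)} [IsProbabilityMeasure μ] {c : ℝ≥0}
    {γ β : ℝ} (hγ : 0 ≤ γ) (hβ : γ < β)
    (hμ : ∀ σ : List Bool, μ (Cyl σ) ≤ (c:ℝ≥0∞) * (2:ℝ≥0∞) ^ (-(β * σ.length))) :
    energy γ μ < ⊤ := by
  set r : ℝ≥0∞ := (2:ℝ≥0∞) ^ (γ - β) with hr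
  have hr1 : r < 1 := two_rpow_lt_one (by linarith)
  have hC : (c:ℝ≥0∞) * (1 - r)⁻¹ < ⊤ := by
    apply ENNReal.mul_lt_top ENNReal.coe_lt_top
    simp only [ENNReal.inv_lt_top]
    exact tsub_pos_of_lt hr1
  have hinner : ∀ a : ℕ → Bool,
      ∫⁻ b, (upsilonE a b) ^ (-γ) ∂μ ≤ (c:ℝ≥0∞) * (1 - r)⁻¹ := by
    intro a
    have hμa : μ {a} = 0 := mu_singleton_zero (by linarith) hμ a
    calc ∫⁻ b, (upsilonE a b) ^ (-γ) ∂μ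
        ≤ ∫⁻ b, ((∑' n : ℕ, (Cyl (pref a n) \ Cyl (pref a (n+1))).indicator
            (fun _ => (2:ℝ≥0∞) ^ (γ * n)) b) +
          ({a} : Set (ℕ → Bool)).indicator (fun _ => (⊤ : ℝ≥0∞)) b) ∂μ :=
          lintegral_mono fun b => pointwise_bound γ a b
      _ = (∑' n : ℕ, ∫⁻ b, (Cyl (pref a n) \ Cyl (pref a (n+1))).indicator
            (fun _ => (2:ℝ≥0∞) ^ (γ * n)) b ∂μ) +
          ∫⁻ b, ({a} : Set (ℕ → Bool)).indicator (fun _ => (⊤ : ℝ≥0∞)) b ∂μ := by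
          rw [lintegral_add_right _ (measurable_const.indicator (measurableSet_singleton a)),
            lintegral_tsum]
          intro n
          exact (measurable_const.indicator
            ((measurableSet_cyl _).diff (measurableSet_cyl _))).aemeasurable
      _ ≤ (∑' n : ℕ, (c:ℝ≥0∞) * r ^ n) + 0 := by
          gcongr with n
          · rw [lintegral_indicator_const ((measurableSet_cyl _).diff (measurableSet_cyl _))]
            calc (2:ℝ≥0∞) ^ (γ * (n:ℝ)) * μ (Cyl (pref a n) \ Cyl (pref a (n+1)))
                ≤ (2:ℝ≥0∞) ^ (γ * (n:ℝ)) * ((c:ℝ≥0∞) * (2:ℝ≥0∞) ^ (-(β * (pref a n).length))) := by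
                  gcongr
                  exact le_trans (measure_mono Set.diff_subset) (hμ _)
              _ = (c:ℝ≥0∞) * r ^ n := by
                  rw [pref, List.length_ofFn, ← mul_assoc, mul_comm ((2:ℝ≥0∞) ^ (γ * (n:ℝ))),
                    mul_assoc, ← ENNReal.rpow_add _ _ (by norm_num) (by norm_num)]
                  congr 1
                  rw [show γ * (n:ℝ) + -(β * (n:ℝ)) = (γ - β) * (n:ℝ) by ring,
                    ENNReal.rpow_mul, ENNReal.rpow_natCast]
          · rw [lintegral_indicator_const (measurableSet_singleton a), hμa, mul_zero]
      _ = (c:ℝ≥0∞) * (1 - r)⁻¹ := by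
          rw [add_zero, ENNReal.tsum_mul_left, ENNReal.tsum_geometric]
  calc energy γ μ ≤ ∫⁻ _, (c:ℝ≥0∞) * (1 - r)⁻¹ ∂μ := lintegral_mono hinner
    _ = (c:ℝ≥0∞) * (1 - r)⁻¹ := by simp
    _ < ⊤ := hC

theorem partrec_recursiveIn (O : ℕ →. ℕ) {f : ℕ →. ℕ} (h : Nat.Partrec f) :
    RecursiveInOracle O f := by
  induction h with
  | zero => exact .zero
  | succ => exact .succ
  | left => exact .left
  | right => exact .right
  | pair _ _ ih₁ ih₂ => exact .pair ih₁ ih₂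
  | comp _ _ ih₁ ih₂ => exact .comp ih₁ ih₂
  | prec _ _ ih₁ ih₂ => exact .prec ih₁ ih₂
  | rfind _ ih => exact .rfind ih

theorem ceFamily_to_ceInFamily {U : ℕ → Set (List Bool)} (h : CEFamily U)
    (O : ℕ →. ℕ) : CEInFamily O U := by
  obtain ⟨G, hG, hmem⟩ := h
  -- the total test function
  set q : ℕ → ℕ := fun m =>
    bif decide (Option.map Encodable.encode (G (m.unpair.1.unpair.1, m.unpair.2))
        = some m.unpair.1.unpair.2) then 0 else 1 with hq
  have hqc : Computable q := by
    apply Computable.cond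
    · apply ((Primrec.eq (α := Option ℕ)).decide.to_comp).comp
      · exact Computable.option_map
          (hG.comp (Computable.pair
            ((Computable.fst.comp Computable.unpair).comp
              (Computable.fst.comp Computable.unpair))
            (Computable.snd.comp Computable.unpair)))
          (Computable.encode.comp Computable.snd)
      · exact Computable.option_some.comp
          ((Computable.snd.comp Computable.unpair).comp
            (Computable.fst.comp Computable.unpair))
    · exact Computable.const 0
    · exact Computable.const 1
  have hqpart : RecursiveInOracle O (fun n => Part.some (q n)) := by
    apply partrec_recursiveIn O
    exact Partrec.nat_iff.1 hqc
  refine ⟨_, RecursiveInOracle.rfind hqpart, ?_⟩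
  have hDom : ∀ a : ℕ, (a ∈ PFun.Dom fun a => Nat.rfind fun s =>
      (fun m => decide (m = 0)) <$> (fun n => Part.some (q n)) (Nat.pair a s)) ↔
      ∃ s, q (Nat.pair a s) = 0 := by
    intro a
    show (Nat.rfind _).Dom ↔ _
    refine Nat.rfind_dom.trans ?_
    constructor
    · rintro ⟨s, hs, _⟩
      exact ⟨s, by simpa using hs⟩
    · rintro ⟨s, hs⟩
      exact ⟨s, by simpa using hs, fun {m} _ => by simp [Part.Dom]⟩
  have hq0 : ∀ (n : ℕ) (w : List Bool) (s : ℕ),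
      q (Nat.pair (Nat.pair n (Encodable.encode w)) s) = 0 ↔ G (n, s) = some w := by
    intro n w s
    simp only [hq, Nat.unpair_pair]
    rcases hGns : G (n, s) with _ | w'
    · simp
    · simp [Encodable.encode_inj]
      by_cases hww : w' = w <;> simp [hww]
  intro n w
  rw [hmem, hDom]
  exact exists_congr fun s => (hq0 n w s).symm

lemma exists_rep (μ : Measure (ℕ → Bool)) : ∃ g : List Bool × ℕ → ℚ, Represents g μ := by
  have h : ∀ p : List Bool × ℕ, ∃ q : ℚ,
      |(q : ℝ) - (μ (Cyl p.1)).toReal| ≤ (2:ℝ) ^ (-(p.2:ℝ)) := by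
    intro p
    obtain ⟨q, hq⟩ := exists_rat_near ((μ (Cyl p.1)).toReal)
      (show (0:ℝ) < (2:ℝ) ^ (-(p.2:ℝ)) by positivity)
    exact ⟨q, by rw [abs_sub_comm]; exact hq.le⟩
  choose g hg using h
  exact ⟨g, fun σ n => hg (σ, n)⟩

lemma muRandom_passesPlain {μ : Measure (ℕ → Bool)} {x : ℕ → Bool}
    (h : MuRandom μ x) : PassesPlainTests μ x := by
  intro U hU hb
  obtain ⟨g, hg⟩ := exists_rep μ
  exact h g hg U (ceFamily_to_ceInFamily hU _) hb

theorem stmt17 (γ β : ℝ) (hγ : 0 ≤ γ) (hβ : γ < β) (x : ℕ → Bool)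
    (hcap : ∃ (μ : Measure (ℕ → Bool)) (c : ℝ≥0), IsProbabilityMeasure μ ∧
      (∀ σ : List Bool, μ (Cyl σ) ≤ (c:ℝ≥0∞) * (2:ℝ≥0∞) ^ (-(β * σ.length))) ∧
      MuRandom μ x) :
    (∃ μ : Measure (ℕ → Bool), IsProbabilityMeasure μ ∧ energy γ μ < ⊤ ∧ MuRandom μ x) ∧
    (∃ μ : Measure (ℕ → Bool), IsProbabilityMeasure μ ∧ energy γ μ < ⊤ ∧
      PassesPlainTests μ x) := by
  obtain ⟨μ, c, hprob, hbd, hrand⟩ := hcap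
  have hE : energy γ μ < ⊤ := energy_finite hγ hβ hbd
  exact ⟨⟨μ, hprob, hE, hrand⟩, ⟨μ, hprob, hE, muRandom_passesPlain hrand⟩⟩
end
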